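/- In a PET whose scalars are the real unit interval, every scalar is self-adjoint: s† = s for all scalars s : I → I. -/
import Mathlib


universe u v

/-- An effect algebra: a set with a partially defined commutative associative
addition (encoded via `Option`), a zero, a one, such that `x + 0 = x`,
`x + 1` defined implies `x = 0`, and every element has a unique complement. -/
structure EffectAlgebra (E : Type u) where
  add : E → E → Option E
  zero : E
  one : E
  add_comm' : ∀ x y, add x y = add y x
  add_assoc' : ∀ x y z xy xyz, add x y = some xy → add xy z = some xyz →
      ∃ yz, add y z = some yz ∧ add x yz = some xyz
  add_zero' : ∀ x, add x zero = some x
  one_max : ∀ x y, add x one = some y → x = zero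
  compl_exists : ∀ x, ∃ y, add x y = some one
  compl_unique : ∀ x y₁ y₂, add x y₁ = some one → add x y₂ = some one → y₁ = y₂

namespace EffectAlgebra

variable {E : Type u} (a : EffectAlgebra E)

/-- The natural order: `x ≤ y` iff there is `z` with `x + z = y`. -/
def le (x y : E) : Prop := ∃ z, a.add x z = some y

/-- The complement `x⊥`: the unique element with `x + x⊥ = 1`. -/
noncomputable def compl (x : E) : E := Classical.choose (a.compl_exists x)

theorem compl_spec (x : E) : a.add x (a.compl x) = some a.one :=
  Classical.choose_spec (a.compl_exists x)

end EffectAlgebra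

open CategoryTheory

/-- An effect theory: a category with a designated trivial system `I` such
that each `Eff(A) := Hom(A, I)` is an effect algebra and precomposition
preserves zero and partial sums. -/
structure EffectTheory (C : Type u) [Category.{v} C] where
  I : C
  ea : ∀ A : C, EffectAlgebra (A ⟶ I)
  comp_zero : ∀ {A B : C} (g : B ⟶ A), g ≫ (ea A).zero = (ea B).zero
  comp_add : ∀ {A B : C} (g : B ⟶ A) (p q s : A ⟶ I),
      (ea A).add p q = some s → (ea B).add (g ≫ p) (g ≫ q) = some (g ≫ s)

namespace EffectTheory

variable {C : Type u} [Category.{v} C] (E : EffectTheory C)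

/-- `q` is the image of `f`: the least effect with `q ∘ f = 1 ∘ f`. -/
def IsImage {A B : C} (f : A ⟶ B) (q : B ⟶ E.I) : Prop :=
  f ≫ q = f ≫ (E.ea B).one ∧
    ∀ r : B ⟶ E.I, f ≫ r = f ≫ (E.ea B).one → (E.ea B).le q r

/-- An effect is sharp when it is the image of some map. -/
def Sharp {A : C} (q : A ⟶ E.I) : Prop := ∃ (B : C) (f : B ⟶ A), E.IsImage f q

/-- `π` is a compression for the effect `q`: `1 ∘ π = q ∘ π`, and `π` is final
with this property. -/
def IsCompression {B A : C} (π : B ⟶ A) (q : A ⟶ E.I) : Prop :=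
  π ≫ (E.ea A).one = π ≫ q ∧
    ∀ {D : C} (f : D ⟶ A), f ≫ (E.ea A).one = f ≫ q → ∃! g : D ⟶ B, f = g ≫ π

/-- `ξ` is a filter for the effect `q`: `1 ∘ ξ ≤ q`, and `ξ` is initial with
this property. -/
def IsFilter {A B : C} (ξ : A ⟶ B) (q : A ⟶ E.I) : Prop :=
  (E.ea A).le (ξ ≫ (E.ea B).one) q ∧
    ∀ {D : C} (f : A ⟶ D), (E.ea A).le (f ≫ (E.ea D).one) q → ∃! g : B ⟶ D, f = ξ ≫ g

/-- A map is pure when it is a filter followed by a compression. -/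
def Pure {A B : C} (f : A ⟶ B) : Prop :=
  ∃ (D : C) (q : A ⟶ E.I) (r : B ⟶ E.I) (ξ : A ⟶ D) (π : D ⟶ B),
    E.IsFilter ξ q ∧ E.IsCompression π r ∧ f = ξ ≫ π

end EffectTheory

/-- A pure effect theory (PET): an effect theory in which every effect has a
filter and a compression, every map has an image, the negation of a sharp
effect is sharp, the pure maps form a dagger category, filters and
compressions of sharp effects are adjoint, and compressions of sharp effects
are isometries. -/
structure PET {C : Type u} [Category.{v} C] (E : EffectTheory C) where
  compObj : ∀ {A : C}, (A ⟶ E.I) → C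
  compr : ∀ {A : C} (q : A ⟶ E.I), compObj q ⟶ A
  compr_is : ∀ {A : C} (q : A ⟶ E.I), E.IsCompression (compr q) q
  filtObj : ∀ {A : C}, (A ⟶ E.I) → C
  filt : ∀ {A : C} (q : A ⟶ E.I), A ⟶ filtObj q
  filt_is : ∀ {A : C} (q : A ⟶ E.I), E.IsFilter (filt q) q
  im : ∀ {A B : C}, (A ⟶ B) → (B ⟶ E.I)
  im_is : ∀ {A B : C} (f : A ⟶ B), E.IsImage f (im f)
  dag : ∀ {A B : C}, (A ⟶ B) → (B ⟶ A)
  pure_id : ∀ A : C, E.Pure (𝟙 A)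
  pure_comp : ∀ {A B D : C} (f : A ⟶ B) (g : B ⟶ D), E.Pure f → E.Pure g → E.Pure (f ≫ g)
  pure_dag : ∀ {A B : C} (f : A ⟶ B), E.Pure f → E.Pure (dag f)
  dag_dag : ∀ {A B : C} (f : A ⟶ B), E.Pure f → dag (dag f) = f
  dag_id : ∀ A : C, dag (𝟙 A) = 𝟙 A
  dag_comp : ∀ {A B D : C} (f : A ⟶ B) (g : B ⟶ D), E.Pure f → E.Pure g →
      dag (f ≫ g) = dag g ≫ dag f
  sharp_compl : ∀ {A : C} (q : A ⟶ E.I), E.Sharp q → E.Sharp ((E.ea A).compl q)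
  dag_compr_filt : ∀ {A B : C} (π : B ⟶ A) (q : A ⟶ E.I), E.Sharp q →
      E.IsCompression π q → E.IsFilter (dag π) q
  dag_filt_compr : ∀ {A B : C} (ξ : A ⟶ B) (q : A ⟶ E.I), E.Sharp q →
      E.IsFilter ξ q → E.IsCompression (dag ξ) q
  compr_isometry : ∀ {A B : C} (π : B ⟶ A) (q : A ⟶ E.I), E.Sharp q →
      E.IsCompression π q → π ≫ dag π = 𝟙 B

namespace PET

variable {C : Type u} [Category.{v} C] {E : EffectTheory C} (P : PET E)

/-- The assert map of an effect `p`: `asrt_p := π_p ∘ π_p†`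
(in diagrammatic order, `π_p†` followed by `π_p`). -/
def asrt {A : C} (p : A ⟶ E.I) : A ⟶ A := P.dag (P.compr p) ≫ P.compr p

end PET

/-- In a PET whose scalars are the real unit interval (with
composition corresponding to multiplication and the effect-algebra order to
the usual order, and with every scalar pure), every scalar is self-adjoint:
`s† = s`. -/
theorem pet_scalar_self_adjoint {C : Type u} [Category.{v} C] {E : EffectTheory C}
    (P : PET E) (φ : (E.I ⟶ E.I) → ℝ)
    (hinj : Function.Injective φ)
    (hmem : ∀ s : E.I ⟶ E.I, φ s ∈ Set.Icc (0 : ℝ) 1)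
    (hsurj : ∀ r ∈ Set.Icc (0 : ℝ) 1, ∃ s : E.I ⟶ E.I, φ s = r)
    (hmul : ∀ s t : E.I ⟶ E.I, φ (s ≫ t) = φ s * φ t)
    (horder : ∀ s t : E.I ⟶ E.I, (E.ea E.I).le s t ↔ φ s ≤ φ t)
    (hpure : ∀ s : E.I ⟶ E.I, E.Pure s) :
    ∀ s : E.I ⟶ E.I, P.dag s = s := by
  have mono : ∀ u v : E.I ⟶ E.I, φ u ≤ φ v → φ (P.dag u) ≤ φ (P.dag v) := by
    intro u v huv
    rcases (hmem v).1.lt_or_eq with hv | hv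
    · obtain ⟨r, hr⟩ := hsurj (φ u / φ v)
        ⟨div_nonneg (hmem u).1 (le_of_lt hv), (div_le_one hv).2 huv⟩
      have hu : u = r ≫ v := by
        apply hinj
        rw [hmul, hr, div_mul_cancel₀ _ (ne_of_gt hv)]
      have hd : P.dag u = P.dag v ≫ P.dag r := by
        rw [hu, P.dag_comp r v (hpure r) (hpure v)]
      rw [hd, hmul]
      exact mul_le_of_le_one_right (hmem _).1 (hmem _).2
    · have : u = v := hinj (le_antisymm (hv ▸ huv) (hv ▸ (hmem u).1))
      rw [this]
  intro s
  apply hinj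
  rcases le_total (φ (P.dag s)) (φ s) with h | h
  · refine le_antisymm h ?_
    have := mono _ _ h
    rwa [P.dag_dag s (hpure s)] at this
  · refine le_antisymm ?_ h
    have := mono _ _ h
    rwa [P.dag_dag s (hpure s)] at this
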